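/- arXiv:1604.00777 — 2 statements merged into one kernel-verified Lean document; each statement's English description precedes it below -/
import Mathlib

section
/- Let R ⊆ A × X be RS-compatible on a polarity. Define, on Galois-stable subsets of A, the operation □U := ⋂ {R⁻¹[x] | x ∈ X, U ⊆ {x}↓}. Then □ preserves arbitrary intersections of Galois-stable sets: □(⋂ᵢ Uᵢ) = ⋂ᵢ □Uᵢ whenever each Uᵢ is Galois-stable, provided each Uᵢ equals the intersection of the sets {x}↓ containing it. -/
variable {A X : Type*}

/-- The upper Galois map of a polarity. -/
def up (perp : A → X → Prop) (U : Set A) : Set X := {x | ∀ a ∈ U, perp a x}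

/-- The lower Galois map of a polarity. -/
def dn (perp : A → X → Prop) (V : Set X) : Set A := {a | ∀ x ∈ V, perp a x}

/-- Specialization pre-order on objects. -/
def leA (perp : A → X → Prop) (a b : A) : Prop := ∀ x, perp b x → perp a x

/-- Specialization pre-order on features. -/
def leX (perp : A → X → Prop) (x y : X) : Prop := ∀ a, perp a x → perp a y

theorem box_preserves_inter (perp : A → X → Prop) (R : A → X → Prop)
    (hc1 : ∀ x : X, dn perp (up perp {a | R a x}) ⊆ {a | R a x})
    (hc2 : ∀ a : A, up perp (dn perp {x | R a x}) ⊆ {x | R a x})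
    {ι : Type*} (U : ι → Set A)
    (hstab : ∀ i, dn perp (up perp (U i)) = U i)
    (hmeet : ∀ i, U i = ⋂ x ∈ {x : X | U i ⊆ dn perp {x}}, dn perp {x}) :
    (⋂ x ∈ {x : X | (⋂ i, U i) ⊆ dn perp {x}}, {a | R a x}) =
      ⋂ i, ⋂ x ∈ {x : X | U i ⊆ dn perp {x}}, {a | R a x} := by
  ext a
  simp only [Set.mem_iInter, Set.mem_setOf_eq]
  constructor
  · intro h i x hx
    exact h x (fun b hb => hx (Set.mem_iInter.mp hb i))
  · intro h x hx
    -- use hc2: show x ∈ up perp (dn perp {x' | R a x'})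
    apply hc2 a
    intro b hb
    -- b ∈ dn perp {x' | R a x'}; show perp b x
    apply hx
    refine Set.mem_iInter.mpr fun i => ?_
    rw [hmeet i]
    apply Set.mem_iInter₂.mpr
    intro y hy z hz
    rw [Set.mem_singleton_iff] at hz
    subst hz
    exact hb z (h i z hy)
    rfl
end

section
/- Let R ⊆ A × X be RS-compatible. The axiom correspondent of factivity holds in the following sense: □({m}↓) ⊆ {m}↓ for all m ∈ X if and only if ∀a ∀m (a R m → a ⊥ m), where □U := ⋂ {R⁻¹[y] | U ⊆ {y}↓}. -/
variable {A X : Type*}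

theorem factivity_correspondence (perp : A → X → Prop) (R : A → X → Prop)
    (hc1 : ∀ x : X, dn perp (up perp {a | R a x}) ⊆ {a | R a x})
    (hc2 : ∀ a : A, up perp (dn perp {x | R a x}) ⊆ {x | R a x}) :
    (∀ m : X, (⋂ y ∈ {y : X | dn perp {m} ⊆ dn perp {y}}, {a | R a y}) ⊆ dn perp {m}) ↔
      (∀ a m, R a m → perp a m) := by
  constructor
  · intro h a m hRm
    have ha : a ∈ ⋂ y ∈ {y : X | dn perp {m} ⊆ dn perp {y}}, {a | R a y} := by
      simp only [Set.mem_iInter]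
      intro y hy
      apply hc2 a
      intro b hb
      exact hy (fun x hx => hx ▸ hb m hRm) y rfl
    exact h m ha m rfl
  · intro h m a ha
    intro x hx
    subst hx
    simp only [Set.mem_iInter] at ha
    exact h a x (ha x (fun b hb => hb))
end
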